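/- Suppose p(t) ∈ ℚ[t] satisfies both p(t) = Σ_{i=0}^d [C(t+i, i+1) − C(t+i−e_i, i+1)] for integers e_0 ≥ e_1 ≥ … ≥ e_d > 0 and p(t) = Σ_{j=1}^r C(t + b_j − (j−1), b_j) for integers b_1 ≥ b_2 ≥ … ≥ b_r ≥ 0. Then r = e_0, and the partition (b_1,…,b_r) is conjugate to (e_1,…,e_d): setting e_{d+1} := 0, for every 0 ≤ i ≤ d and every index j with e_{i+1} < j ≤ e_i one has b_j = i. -/

import Mathlib

/-- The polynomial binomial coefficient `C(t+a, b) ∈ ℚ[t]`. -/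
noncomputable def polyBinom (a b : ℤ) : Polynomial ℚ :=
  if 0 ≤ b then
    (Nat.factorial b.toNat : ℚ)⁻¹ •
      (descPochhammer ℚ b.toNat).comp (Polynomial.X + Polynomial.C (a : ℚ))
  else 0

/-- The Gotzmann expression `Σ_{j=1}^r C(t + b_j − (j−1), b_j)`. -/
noncomputable def gotzmannSum (r : ℕ) (b : Fin r → ℤ) : Polynomial ℚ :=
  ∑ j : Fin r, polyBinom (b j - ((j : ℕ) : ℤ)) (b j)

/-- The Macaulay–Hartshorne expression `Σ_{i=0}^d [C(t+i, i+1) − C(t+i−e_i, i+1)]`. -/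
noncomputable def mhSum (d : ℕ) (e : Fin (d + 1) → ℤ) : Polynomial ℚ :=
  ∑ i : Fin (d + 1),
    (polyBinom ((i : ℕ) : ℤ) (((i : ℕ) : ℤ) + 1) -
      polyBinom (((i : ℕ) : ℤ) - e i) (((i : ℕ) : ℤ) + 1))

namespace Gz
open Polynomial Finset

noncomputable def F (a b : ℤ) (x : ℚ) : ℚ := (polyBinom a b).eval x

lemma F_def (a b : ℤ) (x : ℚ) (hb : 0 ≤ b) :
    F a b x = ((b.toNat.factorial : ℚ))⁻¹ * (descPochhammer ℚ b.toNat).eval (x + a) := by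
  unfold F polyBinom
  rw [if_pos hb]
  simp [Polynomial.eval_smul, Polynomial.eval_comp, smul_eq_mul]

lemma F_neg {b : ℤ} (a : ℤ) (x : ℚ) (hb : b < 0) : F a b x = 0 := by
  unfold F polyBinom
  rw [if_neg (not_le.mpr hb)]
  simp

lemma F_zero (a : ℤ) (x : ℚ) : F a 0 x = 1 := by
  rw [F_def a 0 x le_rfl]
  simp

lemma descPoch_eval_add_one (n : ℕ) (y : ℚ) :
    (descPochhammer ℚ (n+1)).eval (y + 1) = (y + 1) * (descPochhammer ℚ n).eval y := by
  rw [descPochhammer_succ_left]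
  simp [Polynomial.eval_comp]

lemma pascal (a b : ℤ) (x : ℚ) : F (a+1) b x = F a b x + F a (b-1) x := by
  rcases lt_trichotomy b 0 with hb | hb | hb
  · rw [F_neg _ _ hb, F_neg _ _ hb, F_neg _ _ (by omega), add_zero]
  · subst hb
    rw [F_zero, F_zero, F_neg _ _ (by omega), add_zero]
  · have hb' : 0 ≤ b := hb.le
    have hb1 : 0 ≤ b - 1 := by omega
    obtain ⟨m, hm⟩ : ∃ m : ℕ, b.toNat = m + 1 := ⟨(b-1).toNat, by omega⟩
    have hbm : (b-1).toNat = m := by omega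
    rw [F_def _ _ _ hb', F_def _ _ _ hb', F_def _ _ _ hb1, hm, hbm]
    have h1 : x + ((a : ℚ) + 1) = (x + a) + 1 := by push_cast; ring
    have h2 : ((a+1 : ℤ) : ℚ) = (a : ℚ) + 1 := by push_cast; ring
    rw [h2, h1, descPoch_eval_add_one, descPochhammer_succ_eval]
    have hmc : ((m : ℚ) + 1) ≠ 0 := by positivity
    have hfac : ((m+1).factorial : ℚ) = (m+1) * m.factorial := by
      rw [Nat.factorial_succ]; push_cast; ring
    rw [hfac]
    have hf : (m.factorial : ℚ) ≠ 0 := Nat.cast_ne_zero.mpr m.factorial_ne_zero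
    field_simp
    ring

lemma F_shift (a b : ℤ) (x : ℚ) : F a b (x - 1) = F (a - 1) b x := by
  rcases le_or_gt 0 b with hb | hb
  · rw [F_def _ _ _ hb, F_def _ _ _ hb]
    push_cast
    ring_nf
  · rw [F_neg _ _ hb, F_neg _ _ hb]

lemma pascal_diff (a b : ℤ) (x : ℚ) : F a b x - F a b (x - 1) = F (a-1) (b-1) x := by
  rw [F_shift]
  have := pascal (a-1) b x
  have h : a - 1 + 1 = a := by ring
  rw [h] at this
  rw [this]; ring

lemma tel (a n : ℤ) (m : ℕ) (x : ℚ) :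
    ∑ k ∈ range m, F (a - k) n x = F (a+1) (n+1) x - F (a+1-m) (n+1) x := by
  induction m with
  | zero => simp
  | succ m ih =>
    rw [Finset.sum_range_succ, ih]
    have hp := pascal (a - m) (n+1) x
    have h1 : a - (m:ℤ) + 1 = a + 1 - m := by ring
    have h2 : (n:ℤ) + 1 - 1 = n := by ring
    rw [h1, h2] at hp
    have h3 : a + 1 - ((m:ℕ)+1 : ℕ) = a - m := by push_cast; ring
    rw [h3]
    rw [hp]
    ring


-- down-closed counting in ℕ
lemma downclosed_card {r : ℕ} (P : ℕ → Prop) [DecidablePred P]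
    (hdc : ∀ j k, j ≤ k → k < r → P k → P j) :
    ∀ j < r, (P j ↔ j < ((range r).filter P).card) := by
  intro j hj
  constructor
  · intro hP
    have hsub : range (j+1) ⊆ (range r).filter P := by
      intro k hk
      simp only [mem_range] at hk
      simp only [mem_filter, mem_range]
      exact ⟨by omega, hdc k j (by omega) hj hP⟩
    have := Finset.card_le_card hsub
    simpa using this
  · intro hcard
    by_contra hP
    have hsub : (range r).filter P ⊆ range j := by
      intro k hk
      simp only [mem_filter, mem_range] at hk
      simp only [mem_range]
      by_contra hk'
      exact hP (hdc j k (by omega) hk.1 hk.2)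
    have := Finset.card_le_card hsub
    simp only [Finset.card_range] at this
    omega

lemma polyBinom_of_nonneg (a b : ℤ) (hb : 0 ≤ b) :
    polyBinom a b = (b.toNat.factorial : ℚ)⁻¹ •
      (descPochhammer ℚ b.toNat).comp (Polynomial.X + Polynomial.C (a : ℚ)) := by
  unfold polyBinom; rw [if_pos hb]

lemma monic_aux (a : ℤ) (n : ℕ) :
    ((descPochhammer ℚ n).comp (Polynomial.X + Polynomial.C (a : ℚ))).Monic :=
  (monic_descPochhammer ℚ n).comp_X_add_C _

lemma natDegree_aux (a : ℤ) (n : ℕ) :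
    ((descPochhammer ℚ n).comp (Polynomial.X + Polynomial.C (a : ℚ))).natDegree = n := by
  rw [natDegree_comp, descPochhammer_natDegree, natDegree_X_add_C, mul_one]

lemma coeff_polyBinom_self (a b : ℤ) (hb : 0 ≤ b) :
    (polyBinom a b).coeff b.toNat = (b.toNat.factorial : ℚ)⁻¹ := by
  rw [polyBinom_of_nonneg a b hb, Polynomial.coeff_smul]
  have h := (monic_aux a b.toNat)
  have h3 := h.coeff_natDegree
  rw [natDegree_aux a b.toNat] at h3
  rw [h3]
  simp

lemma coeff_polyBinom_zero (a b : ℤ) (m : ℕ) (hm : b < (m : ℤ)) :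
    (polyBinom a b).coeff m = 0 := by
  rcases le_or_gt 0 b with hb | hb
  · rw [polyBinom_of_nonneg a b hb, Polynomial.coeff_smul]
    rw [Polynomial.coeff_eq_zero_of_natDegree_lt (by rw [natDegree_aux]; omega)]
    simp
  · unfold polyBinom; rw [if_neg (not_le.mpr hb)]; simp


lemma sum_restrict (r rp : ℕ) (b : ℕ → ℤ) (x : ℚ) (hle : rp ≤ r)
    (hz : ∀ j, rp ≤ j → j < r → b j = 0) :
    ∑ j ∈ range r, F (b j - 1 - j) (b j - 1) x
      = ∑ j ∈ range rp, F (b j - 1 - j) (b j - 1) x := by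
  rw [← Finset.sum_subset (Finset.range_subset_range.mpr hle)]
  intro j hj hj'
  simp only [mem_range] at hj hj'
  rw [hz j (by omega) hj]
  exact F_neg _ _ (by norm_num)

lemma sum_split (r rp : ℕ) (b : ℕ → ℤ) (x : ℚ) (hle : rp ≤ r)
    (hz : ∀ j, rp ≤ j → j < r → b j = 0) :
    ∑ j ∈ range r, F (b j - j) (b j) x
      = (∑ j ∈ range rp, F (b j - j) (b j) x) + (r - rp : ℕ) := by
  have h := Finset.sum_Ico_consecutive (fun j => F (b j - j) (b j) x) (Nat.zero_le rp) hle
  rw [← Finset.range_eq_Ico, ← Finset.range_eq_Ico] at h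
  rw [← h]
  congr 1
  have h1 : ∀ j ∈ Ico rp r, F (b j - (j:ℤ)) (b j) x = 1 := by
    intro j hj
    obtain ⟨ha, hb⟩ := Finset.mem_Ico.mp hj
    rw [hz j ha hb]; exact F_zero _ _
  rw [Finset.sum_congr rfl h1, Finset.sum_const, Nat.card_Ico]
  simp

lemma uniq (n : ℕ) : ∀ (r r' : ℕ) (b b' : ℕ → ℤ),
    (∀ j k, j ≤ k → k < r → b k ≤ b j) →
    (∀ j < r, 0 ≤ b j) → (∀ j < r, b j ≤ (n : ℤ)) →
    (∀ j k, j ≤ k → k < r' → b' k ≤ b' j) →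
    (∀ j < r', 0 ≤ b' j) → (∀ j < r', b' j ≤ (n : ℤ)) →
    (∀ x : ℚ, ∑ j ∈ range r, F (b j - j) (b j) x = ∑ j ∈ range r', F (b' j - j) (b' j) x) →
    r = r' ∧ ∀ j < r, b j = b' j := by
  induction n with
  | zero =>
    intro r r' b b' _ hnn hub _ hnn' hub' hx
    have hz : ∀ j < r, b j = 0 := fun j hj => le_antisymm (by exact_mod_cast hub j hj) (hnn j hj)
    have hz' : ∀ j < r', b' j = 0 := fun j hj => le_antisymm (by exact_mod_cast hub' j hj) (hnn' j hj)
    have h0 := hx 0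
    have e1 : ∑ j ∈ range r, F (b j - j) (b j) (0:ℚ) = (r : ℚ) := by
      have hh : ∀ j ∈ range r, F (b j - (j:ℤ)) (b j) (0:ℚ) = 1 := fun j hj => by
        rw [hz j (mem_range.mp hj)]; exact F_zero _ _
      rw [Finset.sum_congr rfl hh]; simp
    have e2 : ∑ j ∈ range r', F (b' j - j) (b' j) (0:ℚ) = (r' : ℚ) := by
      have hh : ∀ j ∈ range r', F (b' j - (j:ℤ)) (b' j) (0:ℚ) = 1 := fun j hj => by
        rw [hz' j (mem_range.mp hj)]; exact F_zero _ _
      rw [Finset.sum_congr rfl hh]; simp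
    rw [e1, e2] at h0
    have : r = r' := by exact_mod_cast h0
    exact ⟨this, fun j hj => by rw [hz j hj, hz' j (this ▸ hj)]⟩
  | succ n ih =>
    intro r r' b b' hant hnn hub hant' hnn' hub' hx
    set rp := ((range r).filter (fun j => 0 < b j)).card with hrp
    set rp' := ((range r').filter (fun j => 0 < b' j)).card with hrp'
    have hchar : ∀ j < r, (0 < b j ↔ j < rp) :=
      downclosed_card _ (fun j k hjk hk hbk => lt_of_lt_of_le hbk (hant j k hjk hk))
    have hchar' : ∀ j < r', (0 < b' j ↔ j < rp') :=
      downclosed_card _ (fun j k hjk hk hbk => lt_of_lt_of_le hbk (hant' j k hjk hk))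
    have hrple : rp ≤ r := le_trans (Finset.card_filter_le _ _) (by rw [Finset.card_range])
    have hrple' : rp' ≤ r' := le_trans (Finset.card_filter_le _ _) (by rw [Finset.card_range])
    have hz : ∀ j, rp ≤ j → j < r → b j = 0 := fun j h1 h2 =>
      le_antisymm (by by_contra h; exact absurd ((hchar j h2).mp (by omega)) (by omega)) (hnn j h2)
    have hz' : ∀ j, rp' ≤ j → j < r' → b' j = 0 := fun j h1 h2 =>
      le_antisymm (by by_contra h; exact absurd ((hchar' j h2).mp (by omega)) (by omega)) (hnn' j h2)
    -- difference identity
    have hx2 : ∀ x : ℚ, ∑ j ∈ range rp, F (b j - 1 - j) (b j - 1) x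
        = ∑ j ∈ range rp', F (b' j - 1 - j) (b' j - 1) x := by
      intro x
      rw [← sum_restrict r rp b x hrple hz, ← sum_restrict r' rp' b' x hrple' hz']
      have key : ∀ (s : ℕ) (c : ℕ → ℤ), ∑ j ∈ range s, F (c j - 1 - j) (c j - 1) x
          = (∑ j ∈ range s, F (c j - j) (c j) x) - ∑ j ∈ range s, F (c j - j) (c j) (x-1) := by
        intro s c
        rw [← Finset.sum_sub_distrib]
        exact Finset.sum_congr rfl (fun j _ => by
          rw [pascal_diff]; ring_nf)
      rw [key, key, hx x, hx (x-1)]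
    have hIH := ih rp rp' (fun j => b j - 1) (fun j => b' j - 1)
      (fun j k hjk hk => show b k - 1 ≤ b j - 1 by
        have := hant j k hjk (lt_of_lt_of_le hk hrple); omega)
      (fun j hj => show (0:ℤ) ≤ b j - 1 by
        have := (hchar j (lt_of_lt_of_le hj hrple)).mpr hj; omega)
      (fun j hj => show b j - 1 ≤ (n:ℤ) by
        have := hub j (lt_of_lt_of_le hj hrple); push_cast at this; omega)
      (fun j k hjk hk => show b' k - 1 ≤ b' j - 1 by
        have := hant' j k hjk (lt_of_lt_of_le hk hrple'); omega)
      (fun j hj => show (0:ℤ) ≤ b' j - 1 by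
        have := (hchar' j (lt_of_lt_of_le hj hrple')).mpr hj; omega)
      (fun j hj => show b' j - 1 ≤ (n:ℤ) by
        have := hub' j (lt_of_lt_of_le hj hrple'); push_cast at this; omega)
      hx2
    obtain ⟨hrpeq, hbeq⟩ := hIH
    have hbeq' : ∀ j < rp, b j = b' j := fun j hj => by
      have h : b j - 1 = b' j - 1 := hbeq j hj
      omega
    -- now recover r = r'
    have h0 := hx 0
    rw [sum_split r rp b 0 hrple hz, sum_split r' rp' b' 0 hrple' hz'] at h0
    rw [← hrpeq] at h0
    rw [Finset.sum_congr rfl (fun j hj => by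
      rw [hbeq' j (mem_range.mp hj)])] at h0
    have hreq : r = r' := by
      have : ((r - rp : ℕ) : ℚ) = ((r' - rp : ℕ) : ℚ) := by linarith
      have h2 : r - rp = r' - rp := by exact_mod_cast this
      omega
    refine ⟨hreq, fun j hj => ?_⟩
    by_cases hjp : j < rp
    · exact hbeq' j hjp
    · rw [hz j (by omega) hj, hz' j (by omega) (hreq ▸ hj)]

lemma chain (t : ℕ → ℚ) : ∀ (n : ℕ) (g : ℕ → ℕ), (∀ i, i < n → g (i+1) ≤ g i) → g n = 0 →
    ∑ j ∈ range (g 0), t j = ∑ i ∈ range n, ∑ j ∈ Ico (g (i+1)) (g i), t j := by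
  intro n
  induction n with
  | zero => intro g _ h0; rw [h0]; simp
  | succ n ih =>
    intro g hg h0
    have hIH := ih (fun i => g (i+1)) (fun i hi => hg (i+1) (by omega)) h0
    have hsplit := Finset.sum_Ico_consecutive t (Nat.zero_le (g 1)) (hg 0 (by omega))
    rw [← Finset.range_eq_Ico, ← Finset.range_eq_Ico] at hsplit
    rw [← hsplit, hIH, Finset.sum_range_succ']

section
variable (d : ℕ) (e : Fin (d+1) → ℤ)

noncomputable def ebar : ℕ → ℤ := fun i => if h : i ≤ d then e ⟨i, Nat.lt_succ_of_le h⟩ else 0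

noncomputable def conj : ℕ → ℤ := fun j =>
  (((range (d+1)).filter (fun i => (j:ℤ) < ebar d e i)).card : ℤ) - 1
end

variable {d : ℕ} {e : Fin (d+1) → ℤ}


lemma ebar_antitone (he : Antitone e) : ∀ i k : ℕ, i ≤ k → k ≤ d → ebar d e k ≤ ebar d e i := by
  intro i k hik hk
  unfold ebar
  rw [dif_pos hk, dif_pos (le_trans hik hk)]
  exact he (by simpa using hik)

lemma conj_le : ∀ j : ℕ, conj d e j ≤ d := by
  intro j
  unfold conj
  have := Finset.card_filter_le (range (d+1)) (fun i => (j:ℤ) < ebar d e i)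
  rw [Finset.card_range] at this
  omega

lemma hckey (he : Antitone e) : ∀ (j : ℕ) (i : ℕ), i ≤ d →
    ((j:ℤ) < ebar d e i ↔ (i:ℤ) ≤ conj d e j) := by
  intro j i hi
  have hdc : ∀ a k : ℕ, a ≤ k → k < d + 1 → ((j:ℤ) < ebar d e k) → ((j:ℤ) < ebar d e a) :=
    fun a k hak hk hlt => lt_of_lt_of_le hlt (ebar_antitone he a k hak (by omega))
  have := downclosed_card (fun i => (j:ℤ) < ebar d e i) hdc i (by omega)
  unfold conj
  constructor
  · intro h
    have := this.mp h
    omega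
  · intro h
    apply this.mpr
    omega

lemma conj_nonneg (he : Antitone e) (hepos : ∀ i, 0 < e i) :
    ∀ j : ℕ, (j : ℤ) < e 0 → 0 ≤ conj d e j := by
  intro j hj
  have h := (hckey he j 0 (by omega)).mp ?_
  · simpa using h
  · unfold ebar; rw [dif_pos (Nat.zero_le d)]; simpa using hj

lemma conj_antitone (he : Antitone e) : ∀ j k : ℕ, j ≤ k → 0 ≤ conj d e k →
    conj d e k ≤ conj d e j := by
  intro j k hjk hnn
  set i := (conj d e k).toNat with hi
  have hile : (i : ℤ) = conj d e k := by omega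
  have hid : i ≤ d := by have := conj_le (e := e) k; omega
  have h1 : (k:ℤ) < ebar d e i := (hckey he k i hid).mpr (by omega)
  have h2 : (j:ℤ) < ebar d e i := lt_of_le_of_lt (by exact_mod_cast hjk) h1
  have := (hckey he j i hid).mp h2
  omega

/-- main pointwise identity (Lemma A) -/
lemma lemA (he : Antitone e) (hepos : ∀ i, 0 < e i) (x : ℚ) :
    ∑ i ∈ range (d+1), (F i ((i:ℤ)+1) x - F ((i:ℤ) - ebar d e i) ((i:ℤ)+1) x)
      = ∑ j ∈ range (e 0).toNat, F (conj d e j - j) (conj d e j) x := by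
  classical
  set g : ℕ → ℕ := fun i => (ebar d e i).toNat with hg
  have hgmono : ∀ i, i < d + 1 → g (i+1) ≤ g i := by
    intro i hi
    have := ebar_antitone he i (i+1) (by omega)
    by_cases h : i + 1 ≤ d
    · have := this h
      simp only [hg]
      omega
    · have : g (i+1) = 0 := by simp only [hg]; unfold ebar; rw [dif_neg h]; simp
      omega
  have hgd : g (d+1) = 0 := by simp only [hg]; unfold ebar; rw [dif_neg (by omega)]; simp
  have hg0 : g 0 = (e 0).toNat := by
    simp only [hg]; unfold ebar; rw [dif_pos (Nat.zero_le d)]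
    congr 1
  have hgeb : ∀ i : ℕ, i ≤ d → (g i : ℤ) = ebar d e i := by
    intro i hi
    simp only [hg]
    have : 0 < ebar d e i := by unfold ebar; rw [dif_pos hi]; exact hepos _
    omega
  -- group RHS
  rw [← hg0, chain _ (d+1) g hgmono hgd]
  -- per-row value of grouped RHS
  have step1 : ∀ i ∈ range (d+1), ∑ j ∈ Ico (g (i+1)) (g i), F (conj d e j - j) (conj d e j) x
      = F ((i:ℤ)+1 - g (i+1)) ((i:ℤ)+1) x - F ((i:ℤ)+1 - g i) ((i:ℤ)+1) x := by
    intro i hi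
    rw [mem_range] at hi
    have hid : i ≤ d := by omega
    have hconj : ∀ j ∈ Ico (g (i+1)) (g i), conj d e j = (i:ℤ) := by
      intro j hj
      obtain ⟨h1, h2⟩ := Finset.mem_Ico.mp hj
      have hlow : (i:ℤ) ≤ conj d e j := by
        apply (hckey he j i hid).mp
        have := hgeb i hid
        omega
      have hhigh : conj d e j ≤ i := by
        by_cases hcase : i + 1 ≤ d
        · have hne : ¬ ((j:ℤ) < ebar d e (i+1)) := by
            have hle : ebar d e (i+1) ≤ ((g (i+1) : ℕ) : ℤ) := by
              have := hgeb (i+1) hcase; omega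
            omega
          have := (hckey he j (i+1) hcase).not.mp hne
          push_cast at this
          omega
        · have h3 := conj_le (e := e) j
          omega
      omega
    rw [Finset.sum_congr rfl (fun j hj => by rw [hconj j hj])]
    have hmn : g (i+1) ≤ g i := hgmono i (by omega)
    rw [Finset.sum_Ico_eq_sub _ hmn, tel (i:ℤ) (i:ℤ) (g i) x, tel (i:ℤ) (i:ℤ) (g (i+1)) x]
    ring
  rw [Finset.sum_congr rfl step1]
  -- global rearrangement
  have hsub1 : ∑ i ∈ range (d+1), (F (i:ℤ) ((i:ℤ)+1) x - F ((i:ℤ) - ebar d e i) ((i:ℤ)+1) x)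
      = (∑ i ∈ range (d+1), F (i:ℤ) ((i:ℤ)+1) x)
        - ∑ i ∈ range (d+1), F ((i:ℤ) - g i) ((i:ℤ)+1) x := by
    rw [← Finset.sum_sub_distrib]
    refine Finset.sum_congr rfl (fun i hi => ?_)
    rw [mem_range] at hi
    rw [hgeb i (by omega)]
  have hsub2 : ∑ i ∈ range (d+1), (F ((i:ℤ)+1 - g (i+1)) ((i:ℤ)+1) x - F ((i:ℤ)+1 - g i) ((i:ℤ)+1) x)
      = (∑ i ∈ range (d+1), F ((i:ℤ)+1 - g (i+1)) ((i:ℤ)+1) x)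
        - ∑ i ∈ range (d+1), F ((i:ℤ)+1 - g i) ((i:ℤ)+1) x :=
    Finset.sum_sub_distrib _ _
  rw [hsub1, hsub2]
  set S2 := ∑ i ∈ range (d+1), F ((i:ℤ) - g i) ((i:ℤ)+1) x with hS2
  set S3 := ∑ i ∈ range (d+1), F ((i:ℤ) - g i) (i:ℤ) x with hS3
  set T := F ((d:ℤ)+1) ((d:ℤ)+1) x with hT
  -- S1 = T - 1
  have hS1 : ∑ i ∈ range (d+1), F (i:ℤ) ((i:ℤ)+1) x = T - 1 := by
    have hterm : ∀ i ∈ range (d+1), F (i:ℤ) ((i:ℤ)+1) x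
        = F (((i:ℕ)+1 : ℕ):ℤ) (((i:ℕ)+1 : ℕ):ℤ) x - F ((i:ℕ):ℤ) ((i:ℕ):ℤ) x := by
      intro i _
      have hp := pascal (i:ℤ) ((i:ℤ)+1) x
      push_cast
      have h1 : (i:ℤ) + 1 - 1 = (i:ℤ) := by ring
      rw [h1] at hp
      rw [hp]
      ring
    rw [Finset.sum_congr rfl hterm, Finset.sum_range_sub (fun k => F (k:ℤ) (k:ℤ) x) (d+1)]
    rw [hT]
    push_cast
    rw [F_zero]
  -- A = S3 + T - 1
  have hA : ∑ i ∈ range (d+1), F ((i:ℤ)+1 - g (i+1)) ((i:ℤ)+1) x = S3 + T - 1 := by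
    have h1 : ∀ i ∈ range (d+1), F ((i:ℤ)+1 - g (i+1)) ((i:ℤ)+1) x
        = F (((i+1:ℕ):ℤ) - g (i+1)) ((i+1:ℕ):ℤ) x := by
      intro i _
      push_cast
      rfl
    rw [Finset.sum_congr rfl h1]
    have h2 := Finset.sum_range_succ' (fun k : ℕ => F ((k:ℤ) - g k) (k:ℤ) x) (d+1)
    have h3 := Finset.sum_range_succ (fun k : ℕ => F ((k:ℤ) - g k) (k:ℤ) x) (d+1)
    have hB0 : F (((0:ℕ):ℤ) - g 0) ((0:ℕ):ℤ) x = 1 := F_zero _ _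
    have hBd : F (((d+1:ℕ):ℤ) - g (d+1)) ((d+1:ℕ):ℤ) x = T := by
      rw [hgd, hT]
      push_cast
      norm_num
    have hS3' : ∑ k ∈ range (d+1), F ((k:ℤ) - g k) (k:ℤ) x = S3 := by rw [hS3]
    rw [h3, hS3', hBd] at h2
    rw [hB0] at h2
    linarith [h2]
  -- B = S2 + S3
  have hB : ∑ i ∈ range (d+1), F ((i:ℤ)+1 - g i) ((i:ℤ)+1) x = S2 + S3 := by
    have hterm : ∀ i ∈ range (d+1), F ((i:ℤ)+1 - g i) ((i:ℤ)+1) x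
        = F ((i:ℤ) - g i) ((i:ℤ)+1) x + F ((i:ℤ) - g i) (i:ℤ) x := by
      intro i _
      have hp := pascal ((i:ℤ) - g i) ((i:ℤ)+1) x
      have h1 : (i:ℤ) - g i + 1 = (i:ℤ) + 1 - g i := by ring
      have h2 : (i:ℤ) + 1 - 1 = (i:ℤ) := by ring
      rw [h1, h2] at hp
      exact hp
    rw [Finset.sum_congr rfl hterm, Finset.sum_add_distrib]
  rw [hS1, hA, hB]
  ring

end Gz

open Gz Polynomial Finset in
/-- If `p` has a Macaulay–Hartshorne expression with partition `(e_0,…,e_d)` and a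
Gotzmann expression with partition `(b_1,…,b_r)`, then `r = e_0` and the partitions are
conjugate: setting `e_{d+1} := 0`, for `0 ≤ i ≤ d` and `e_{i+1} < j ≤ e_i` one has `b_j = i`.
(Here `j : Fin r` is 0-indexed, so the 1-indexed value is `j + 1`.) -/
theorem statement_1 (p : Polynomial ℚ) (d r : ℕ)
    (e : Fin (d + 1) → ℤ) (b : Fin r → ℤ)
    (he : Antitone e) (hepos : ∀ i, 0 < e i)
    (hb : Antitone b) (hbnn : ∀ j, 0 ≤ b j)
    (hpe : p = mhSum d e) (hpb : p = gotzmannSum r b) :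
    (r : ℤ) = e 0 ∧
    ∀ i : ℕ, ∀ hi : i ≤ d, ∀ j : Fin r,
      (if h : i + 1 ≤ d then e ⟨i + 1, Nat.lt_succ_of_le h⟩ else 0) < ((j : ℕ) : ℤ) + 1 →
      ((j : ℕ) : ℤ) + 1 ≤ e ⟨i, Nat.lt_succ_of_le hi⟩ →
      b j = (i : ℤ) := by
  classical
  set E := (e 0).toNat with hE
  set bb : ℕ → ℤ := fun j => if h : j < r then b ⟨j, h⟩ else 0 with hbb
  have hbbval : ∀ (j : ℕ) (h : j < r), bb j = b ⟨j, h⟩ := by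
    intro j h
    simp only [hbb]
    rw [dif_pos h]
  -- pointwise equality
  have hx : ∀ x : ℚ, ∑ j ∈ range r, F (bb j - j) (bb j) x
      = ∑ j ∈ range E, F (conj d e j - j) (conj d e j) x := by
    intro x
    have hgm : gotzmannSum r b = mhSum d e := hpb.symm.trans hpe
    have h1 : (gotzmannSum r b).eval x = ∑ j ∈ range r, F (bb j - j) (bb j) x := by
      unfold gotzmannSum
      rw [Polynomial.eval_finset_sum,
        ← Fin.sum_univ_eq_sum_range (fun j => F (bb j - j) (bb j) x) r]
      refine Finset.sum_congr rfl (fun j _ => ?_)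
      rw [hbbval (j : ℕ) j.isLt]
      simp only [F, Fin.eta]
    have h2 : (mhSum d e).eval x
        = ∑ i ∈ range (d+1), (F i ((i:ℤ)+1) x - F ((i:ℤ) - ebar d e i) ((i:ℤ)+1) x) := by
      unfold mhSum
      rw [Polynomial.eval_finset_sum,
        ← Fin.sum_univ_eq_sum_range
          (fun i => F i ((i:ℤ)+1) x - F ((i:ℤ) - ebar d e i) ((i:ℤ)+1) x) (d+1)]
      refine Finset.sum_congr rfl (fun i _ => ?_)
      have hie : ebar d e (i : ℕ) = e i := by
        unfold ebar
        rw [dif_pos (Nat.lt_succ_iff.mp i.isLt)]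
      rw [hie]
      simp only [F, Polynomial.eval_sub, Fin.eta]
    rw [← h1, hgm, h2, lemA he hepos x]
  -- bounds
  set n := max p.natDegree d with hn
  have hbbub : ∀ j < r, bb j ≤ (n : ℤ) := by
    intro j hj
    have hr0 : 0 < r := by omega
    have hmono : bb j ≤ b ⟨0, hr0⟩ := by
      rw [hbbval j hj]
      exact hb (by simp [Fin.le_def])
    set m := (b ⟨0, hr0⟩).toNat with hm
    have hm' : (m : ℤ) = b ⟨0, hr0⟩ := by
      have := hbnn ⟨0, hr0⟩
      omega
    have hcoeff : p.coeff m ≠ 0 := by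
      rw [hpb]
      unfold gotzmannSum
      rw [Polynomial.finset_sum_coeff]
      apply ne_of_gt
      apply Finset.sum_pos'
      · intro k _
        rcases lt_or_eq_of_le (hb (show (⟨0, hr0⟩ : Fin r) ≤ k by simp [Fin.le_def])) with hlt | heq
        · rw [coeff_polyBinom_zero _ _ m (by omega)]
        · have htn : (b k).toNat = m := by omega
          rw [← htn, coeff_polyBinom_self _ _ (by omega)]
          positivity
      · refine ⟨⟨0, hr0⟩, Finset.mem_univ _, ?_⟩
        rw [coeff_polyBinom_self _ _ (hbnn _)]
        have : (b ⟨0, hr0⟩).toNat = m := rfl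
        rw [this]
        positivity
    have hdeg : m ≤ p.natDegree := Polynomial.le_natDegree_of_ne_zero hcoeff
    have : (p.natDegree : ℤ) ≤ (n : ℤ) := by
      simp only [hn]
      exact_mod_cast le_max_left _ _
    omega
  have hcnn : ∀ j < E, 0 ≤ conj d e j := by
    intro j hj
    apply conj_nonneg he hepos
    omega
  have hce : ∀ j < E, conj d e j ≤ (n : ℤ) := by
    intro j _
    have h1 := conj_le (e := e) j
    have h2 : (d : ℤ) ≤ (n : ℤ) := by
      simp only [hn]; exact_mod_cast le_max_right _ _
    omega
  have huniq := uniq n r E bb (conj d e)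
    (fun j k hjk hk => by
      rw [hbbval k hk, hbbval j (by omega)]
      exact hb (by simp [Fin.le_def]; omega))
    (fun j hj => by rw [hbbval j hj]; exact hbnn _)
    hbbub
    (fun j k hjk hk => conj_antitone he j k hjk (hcnn k hk))
    hcnn
    hce
    hx
  obtain ⟨hrE, hbc⟩ := huniq
  constructor
  · have := hepos 0
    omega
  · intro i hi j hlt hle
    have hjr : (j : ℕ) < r := j.isLt
    have hbj : b j = conj d e (j : ℕ) := by
      rw [← hbc (j : ℕ) hjr, hbbval (j : ℕ) hjr]
    rw [hbj]
    have hlow : (i : ℤ) ≤ conj d e (j : ℕ) := by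
      apply (hckey he (j : ℕ) i hi).mp
      unfold ebar
      rw [dif_pos hi]
      omega
    have hhigh : conj d e (j : ℕ) ≤ (i : ℤ) := by
      by_cases hcase : i + 1 ≤ d
      · rw [dif_pos hcase] at hlt
        have hne : ¬ ((j : ℕ) : ℤ) < ebar d e (i+1) := by
          unfold ebar
          rw [dif_pos hcase]
          omega
        have := (hckey he (j : ℕ) (i+1) hcase).not.mp hne
        push_cast at this
        omega
      · have := conj_le (e := e) (j : ℕ)
        omega
    omega
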